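/- (Metric of the surface induced by the ℂPᴺ model.) Let Ω ⊆ ℂ be open, N ≥ 1, and let f : Ω → ℂ^{N+1}∖{0} be continuously differentiable. Define P := 1 − (f·fᴴ)/(fᴴ·f) and K := [∂̄P, P]. Then for every ξ ∈ Ω: (i) tr(Kᴴ·K) = ((∂̄fᴴ)·P·(∂f) + (∂fᴴ)·P·(∂̄f))/(fᴴ·f), and (ii) tr(Kᴴ·Kᴴ) = −2·((∂fᴴ)·P·(∂f))/(fᴴ·f), where ∂fᴴ denotes ∂ applied to the map ξ ↦ f(ξ)ᴴ (so ∂fᴴ = (∂̄f)ᴴ and ∂̄fᴴ = (∂f)ᴴ). Consequently, the complex tangent vectors ∂X = i·Kᴴ and ∂̄X = i·K of the generalized Weierstrass immersion satisfy −tr(∂X·∂̄X) = tr(KᴴK) and −tr(∂X·∂X) = tr(KᴴKᴴ) = −2J, where J = (∂fᴴ)·P·(∂f)/(fᴴ·f). -/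

import Mathlib

open Matrix

attribute [local instance] Matrix.frobeniusNormedAddCommGroup Matrix.frobeniusNormedSpace

/-- The Wirtinger derivative `∂F(ξ) = (1/2)(DF(ξ)(1) − i·DF(ξ)(i))`. -/
noncomputable def wd {E : Type*} [NormedAddCommGroup E] [NormedSpace ℂ E]
    (F : ℂ → E) (ξ : ℂ) : E :=
  (2 : ℂ)⁻¹ • (fderiv ℝ F ξ 1 - Complex.I • fderiv ℝ F ξ Complex.I)

/-- The Wirtinger derivative `∂̄F(ξ) = (1/2)(DF(ξ)(1) + i·DF(ξ)(i))`. -/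
noncomputable def wdbar {E : Type*} [NormedAddCommGroup E] [NormedSpace ℂ E]
    (F : ℂ → E) (ξ : ℂ) : E :=
  (2 : ℂ)⁻¹ • (fderiv ℝ F ξ 1 + Complex.I • fderiv ℝ F ξ Complex.I)

/-! ### Auxiliary material -/

lemma star_dot_self_eq_zero {m : ℕ} {x : Fin m → ℂ} (h : star x ⬝ᵥ x = 0) : x = 0 := by
  have h1 : ((∑ j, Complex.normSq (x j) : ℝ) : ℂ) = 0 := by
    rw [← h]
    push_cast
    simp [dotProduct, Complex.normSq_eq_conj_mul_self]
  rw [Complex.ofReal_eq_zero] at h1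
  funext i
  have h2 := (Finset.sum_eq_zero_iff_of_nonneg
    (fun j _ => Complex.normSq_nonneg (x j))).mp h1 i (Finset.mem_univ i)
  simpa using Complex.normSq_eq_zero.mp h2

noncomputable def starCLM (n : ℕ) : (Fin n → ℂ) →L[ℝ] (Fin n → ℂ) :=
  LinearMap.toContinuousLinearMap
    { toFun := star
      map_add' := fun x y => star_add x y
      map_smul' := fun r x => by ext i; simp }

@[simp] lemma starCLM_apply {n : ℕ} (x : Fin n → ℂ) : starCLM n x = star x := rfl

noncomputable instance frobTopFin (n : ℕ) : TopologicalSpace (Matrix (Fin n) (Fin n) ℂ) :=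
  @UniformSpace.toTopologicalSpace _ (@PseudoMetricSpace.toUniformSpace _
    (@SeminormedAddCommGroup.toPseudoMetricSpace _
      (@NormedAddCommGroup.toSeminormedAddCommGroup _ Matrix.frobeniusNormedAddCommGroup)))

noncomputable def vmvCLM (n : ℕ) :
    (Fin n → ℂ) →L[ℝ] (Fin n → ℂ) →L[ℝ] Matrix (Fin n) (Fin n) ℂ :=
  LinearMap.toContinuousLinearMap
    { toFun := fun u => LinearMap.toContinuousLinearMap
        { toFun := fun w => Matrix.vecMulVec u w
          map_add' := fun x y => by ext i j; simp [Matrix.vecMulVec_apply]; ring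
          map_smul' := fun r x => by
            ext i j; simp [Matrix.vecMulVec_apply, smul_mul_assoc, mul_smul_comm]; ring }
      map_add' := fun x y => by
        ext w i j; simp [Matrix.vecMulVec_apply]; ring
      map_smul' := fun r x => by
        ext w i j; simp [Matrix.vecMulVec_apply, smul_mul_assoc] }

@[simp] lemma vmvCLM_apply {n : ℕ} (u w : Fin n → ℂ) :
    vmvCLM n u w = Matrix.vecMulVec u w := rfl

noncomputable def dotCLM (n : ℕ) : (Fin n → ℂ) →L[ℝ] (Fin n → ℂ) →L[ℝ] ℂ :=
  LinearMap.toContinuousLinearMap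
    { toFun := fun u => LinearMap.toContinuousLinearMap
        { toFun := fun w => u ⬝ᵥ w
          map_add' := fun x y => by simp [dotProduct_add]
          map_smul' := fun r x => by
            simp only [dotProduct, Finset.smul_sum, RingHom.id_apply, Pi.smul_apply,
              smul_eq_mul, Complex.real_smul]
            exact Finset.sum_congr rfl fun k _ => by ring }
      map_add' := fun x y => by ext w; simp [add_dotProduct]
      map_smul' := fun r x => by
        ext w
        simp only [dotProduct, LinearMap.coe_toContinuousLinearMap', LinearMap.coe_mk,
          AddHom.coe_mk, RingHom.id_apply, ContinuousLinearMap.coe_smul', Pi.smul_apply,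
          Finset.smul_sum, smul_eq_mul, Complex.real_smul]
        exact Finset.sum_congr rfl fun k _ => by ring }

@[simp] lemma dotCLM_apply {n : ℕ} (u w : Fin n → ℂ) : dotCLM n u w = u ⬝ᵥ w := rfl

section RankOne
variable {n : ℕ} (a b x : Fin n → ℂ) (M : Matrix (Fin n) (Fin n) ℂ)

lemma vmv_mul_vmv (c d : Fin n → ℂ) :
    vecMulVec a b * vecMulVec c d = (b ⬝ᵥ c) • vecMulVec a d := by
  ext i j
  simp only [Matrix.mul_apply, vecMulVec_apply, Matrix.smul_apply, dotProduct,
    smul_eq_mul, Finset.sum_mul]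
  exact Finset.sum_congr rfl fun k _ => by ring

lemma mul_vmv : M * vecMulVec a b = vecMulVec (M.mulVec a) b := by
  ext i j
  simp only [Matrix.mul_apply, vecMulVec_apply, Matrix.mulVec, dotProduct, Finset.sum_mul]
  exact Finset.sum_congr rfl fun k _ => by ring

lemma vmv_mul : vecMulVec a b * M = vecMulVec a (M.vecMul b) := by
  ext i j
  simp only [Matrix.mul_apply, vecMulVec_apply, Matrix.vecMul, dotProduct, Finset.mul_sum]
  exact Finset.sum_congr rfl fun k _ => by ring

lemma trace_vmv : (vecMulVec a b).trace = a ⬝ᵥ b := by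
  simp [Matrix.trace, Matrix.diag, vecMulVec_apply, dotProduct]

lemma vmv_conjT : (vecMulVec a b)ᴴ = vecMulVec (star b) (star a) := by
  ext i j
  simp [conjTranspose_apply, vecMulVec_apply, mul_comm]

lemma vmv_mulVec : (vecMulVec a b).mulVec x = (b ⬝ᵥ x) • a := by
  ext i
  simp only [Matrix.mulVec, vecMulVec_apply, dotProduct, Pi.smul_apply, smul_eq_mul,
    Finset.sum_mul]
  exact Finset.sum_congr rfl fun k _ => by ring

lemma vecMul_vmv : Matrix.vecMul x (vecMulVec a b) = (x ⬝ᵥ a) • b := by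
  ext j
  simp only [Matrix.vecMul, vecMulVec_apply, dotProduct, Pi.smul_apply, smul_eq_mul,
    Finset.sum_mul]
  exact Finset.sum_congr rfl fun k _ => by ring

lemma vecMul_smulM (c : ℂ) : Matrix.vecMul x (c • M) = c • Matrix.vecMul x M := by
  ext j
  simp only [Matrix.vecMul, dotProduct, Matrix.smul_apply, Pi.smul_apply, smul_eq_mul,
    Finset.mul_sum]
  exact Finset.sum_congr rfl fun k _ => by ring

@[simp] lemma vmv_zero_left : vecMulVec (0 : Fin n → ℂ) b = 0 := by
  ext i j; simp [vecMulVec_apply]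

@[simp] lemma vmv_zero_right : vecMulVec a (0 : Fin n → ℂ) = 0 := by
  ext i j; simp [vecMulVec_apply]

end RankOne

set_option maxHeartbeats 1600000 in
set_option synthInstance.maxHeartbeats 400000 in
/-- Metric of the surface induced by the `ℂPᴺ` model: with `P = 1 − (f·fᴴ)/(fᴴ·f)` and
`K = [∂̄P, P]`, one has `tr(KᴴK) = (∂̄fᴴ P ∂f + ∂fᴴ P ∂̄f)/(fᴴf)` and
`tr(KᴴKᴴ) = −2 (∂fᴴ P ∂f)/(fᴴf)`; consequently, with `∂X = iKᴴ`, `∂̄X = iK`,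
`−tr(∂X·∂̄X) = tr(KᴴK)` and `−tr(∂X·∂X) = tr(KᴴKᴴ) = −2J`. -/
theorem metric_of_CPN_immersion (N : ℕ) (hN : 1 ≤ N) (Ω : Set ℂ) (hΩ : IsOpen Ω)
    (f : ℂ → Fin (N + 1) → ℂ) (hf : ContDiffOn ℝ 1 f Ω) (hf0 : ∀ ξ ∈ Ω, f ξ ≠ 0)
    (P : ℂ → Matrix (Fin (N + 1)) (Fin (N + 1)) ℂ)
    (hP : P = fun ξ => 1 - (star (f ξ) ⬝ᵥ f ξ)⁻¹ • Matrix.vecMulVec (f ξ) (star (f ξ)))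
    (K : ℂ → Matrix (Fin (N + 1)) (Fin (N + 1)) ℂ)
    (hK : K = fun ξ => wdbar P ξ * P ξ - P ξ * wdbar P ξ) :
    ∀ ξ ∈ Ω,
      ((K ξ)ᴴ * K ξ).trace
        = ((wdbar (fun z => star (f z)) ξ ⬝ᵥ (P ξ).mulVec (wd f ξ))
            + (wd (fun z => star (f z)) ξ ⬝ᵥ (P ξ).mulVec (wdbar f ξ)))
          / (star (f ξ) ⬝ᵥ f ξ) ∧
      ((K ξ)ᴴ * (K ξ)ᴴ).trace
        = -2 * (wd (fun z => star (f z)) ξ ⬝ᵥ (P ξ).mulVec (wd f ξ))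
          / (star (f ξ) ⬝ᵥ f ξ) ∧
      -(((Complex.I • (K ξ)ᴴ) * (Complex.I • K ξ)).trace) = ((K ξ)ᴴ * K ξ).trace ∧
      -(((Complex.I • (K ξ)ᴴ) * (Complex.I • (K ξ)ᴴ)).trace)
        = -2 * (wd (fun z => star (f z)) ξ ⬝ᵥ (P ξ).mulVec (wd f ξ))
          / (star (f ξ) ⬝ᵥ f ξ) := by
  intro ξ hξ
  have hd : DifferentiableAt ℝ f ξ :=
    (hf.contDiffAt (hΩ.mem_nhds hξ)).differentiableAt one_ne_zero
  set D := fderiv ℝ f ξ with hD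
  have hfd : HasFDerivAt f D ξ := hd.hasFDerivAt
  set v : Fin (N + 1) → ℂ := f ξ with hv
  set ρ : ℂ := star v ⬝ᵥ v with hρ
  have hρ0 : ρ ≠ 0 := fun h => hf0 ξ hξ (star_dot_self_eq_zero h)
  have ha : wd f ξ = (2:ℂ)⁻¹ • (D 1 - Complex.I • D Complex.I) := rfl
  have hb : wdbar f ξ = (2:ℂ)⁻¹ • (D 1 + Complex.I • D Complex.I) := rfl
  have hSf : HasFDerivAt (fun z => star (f z)) ((starCLM (N + 1)).comp D) ξ :=
    ((starCLM (N + 1)).hasFDerivAt.comp ξ hfd : _)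
  have hwdstar : wdbar (fun z => star (f z)) ξ = star (wd f ξ) := by
    rw [wdbar, hSf.fderiv, ha]
    funext i
    simp [Complex.conj_I, Pi.star_apply, star_smul, star_sub, Complex.star_def, _root_.map_mul]
  have hwdstar' : wd (fun z => star (f z)) ξ = star (wdbar f ξ) := by
    rw [wd, hSf.fderiv, hb]
    funext i
    simp [Complex.conj_I, Pi.star_apply, star_smul, star_add, Complex.star_def, _root_.map_mul]
    ring
  -- derivative of `P`
  have hB1 : HasFDerivAt (fun z => vmvCLM (N + 1) (f z)) ((vmvCLM (N + 1)).comp D) ξ :=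
    ((vmvCLM (N + 1)).hasFDerivAt.comp ξ hfd : _)
  have hV : HasFDerivAt (fun z => Matrix.vecMulVec (f z) (star (f z)))
      ((vmvCLM (N + 1) v).comp ((starCLM (N + 1)).comp D)
        + ((vmvCLM (N + 1)).comp D).flip (star v)) ξ :=
    (hB1.clm_apply hSf : _)
  have hD1 : HasFDerivAt (fun z => dotCLM (N + 1) (star (f z)))
      ((dotCLM (N + 1)).comp ((starCLM (N + 1)).comp D)) ξ :=
    ((dotCLM (N + 1)).hasFDerivAt.comp ξ hSf : _)
  have hρd : HasFDerivAt (fun z => star (f z) ⬝ᵥ f z)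
      ((dotCLM (N + 1) (star v)).comp D
        + ((dotCLM (N + 1)).comp ((starCLM (N + 1)).comp D)).flip v) ξ :=
    (hD1.clm_apply hfd : _)
  set Lρ := (dotCLM (N + 1) (star v)).comp D
        + ((dotCLM (N + 1)).comp ((starCLM (N + 1)).comp D)).flip v with hLρ
  have hinv : HasFDerivAt (fun z => (star (f z) ⬝ᵥ f z)⁻¹)
      ((-(ContinuousLinearMap.mulLeftRight ℝ ℂ ρ⁻¹ ρ⁻¹)).comp Lρ) ξ :=
    ((hasFDerivAt_inv' hρ0).comp ξ hρd : _)
  set LV := (vmvCLM (N + 1) v).comp ((starCLM (N + 1)).comp D)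
        + ((vmvCLM (N + 1)).comp D).flip (star v) with hLV
  set Linv := (-(ContinuousLinearMap.mulLeftRight ℝ ℂ ρ⁻¹ ρ⁻¹)).comp Lρ with hLinv
  have hQ : HasFDerivAt
      (fun z => (star (f z) ⬝ᵥ f z)⁻¹ • Matrix.vecMulVec (f z) (star (f z)))
      (ρ⁻¹ • LV + Linv.smulRight (Matrix.vecMulVec v (star v))) ξ :=
    (hinv.smul hV : _)
  have hPd : HasFDerivAt P
      (-(ρ⁻¹ • LV + Linv.smulRight (Matrix.vecMulVec v (star v)))) ξ := by
    rw [hP]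
    exact (hQ.const_sub 1 : _)
  have hfP : wdbar P ξ = (2:ℂ)⁻¹ •
      ((-(ρ⁻¹ • LV + Linv.smulRight (Matrix.vecMulVec v (star v)))) 1
        + Complex.I •
          (-(ρ⁻¹ • LV + Linv.smulRight (Matrix.vecMulVec v (star v)))) Complex.I) := by
    rw [wdbar, hPd.fderiv]
  have hwdbarP : wdbar P ξ =
      (ρ⁻¹ * ρ⁻¹ * (star (wd f ξ) ⬝ᵥ v + star v ⬝ᵥ wdbar f ξ)) • Matrix.vecMulVec v (star v)
        - ρ⁻¹ • (Matrix.vecMulVec (wdbar f ξ) (star v)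
            + Matrix.vecMulVec v (star (wd f ξ))) := by
    rw [hfP, ha, hb, hLV, hLinv, hLρ]
    ext i j
    simp [ContinuousLinearMap.add_apply, ContinuousLinearMap.coe_comp', Function.comp_apply,
      ContinuousLinearMap.flip_apply, ContinuousLinearMap.smulRight_apply,
      ContinuousLinearMap.neg_apply, ContinuousLinearMap.smul_apply,
      ContinuousLinearMap.mulLeftRight_apply, Matrix.smul_apply, Matrix.add_apply,
      Matrix.sub_apply, Matrix.neg_apply, Matrix.vecMulVec_apply, Pi.star_apply,
      Pi.smul_apply, Pi.add_apply, Pi.sub_apply, smul_eq_mul, star_smul, star_add, star_sub,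
      smul_dotProduct, dotProduct_smul, add_dotProduct,
      dotProduct_add, sub_dotProduct, dotProduct_sub,
      Complex.star_def, _root_.map_mul, Complex.conj_I]
    ring
  -- algebraic facts about `P ξ`
  have hρstar : star ρ = ρ := (star_dotProduct v v).symm
  have hρinvstar : star (ρ⁻¹) = ρ⁻¹ := by rw [star_inv₀, hρstar]
  have hPm : P ξ = 1 - ρ⁻¹ • Matrix.vecMulVec v (star v) := by rw [hP]
  have hVV : Matrix.vecMulVec v (star v) * Matrix.vecMulVec v (star v)
      = ρ • Matrix.vecMulVec v (star v) := by rw [vmv_mul_vmv, ← hρ]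
  have hPv : (P ξ).mulVec v = 0 := by
    rw [hPm, Matrix.sub_mulVec, Matrix.one_mulVec, Matrix.smul_mulVec, vmv_mulVec,
      ← hρ, smul_smul, inv_mul_cancel₀ hρ0, one_smul, sub_self]
  have hvP : Matrix.vecMul (star v) (P ξ) = 0 := by
    rw [hPm, Matrix.vecMul_sub, Matrix.vecMul_one, vecMul_smulM, vecMul_vmv,
      ← hρ, smul_smul, inv_mul_cancel₀ hρ0, one_smul, sub_self]
  have hPV : P ξ * Matrix.vecMulVec v (star v) = 0 := by
    rw [hPm, sub_mul, one_mul, smul_mul_assoc, hVV, smul_smul, inv_mul_cancel₀ hρ0,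
      one_smul, sub_self]
  have hVP : Matrix.vecMulVec v (star v) * P ξ = 0 := by
    rw [hPm, mul_sub, mul_one, mul_smul_comm, hVV, smul_smul, inv_mul_cancel₀ hρ0,
      one_smul, sub_self]
  have hPH : (P ξ)ᴴ = P ξ := by
    rw [hPm, Matrix.conjTranspose_sub, Matrix.conjTranspose_smul, Matrix.conjTranspose_one,
      vmv_conjT, star_star, hρinvstar]
  have hPP : P ξ * P ξ = P ξ := by
    have hA2 : (ρ⁻¹ • Matrix.vecMulVec v (star v)) * (ρ⁻¹ • Matrix.vecMulVec v (star v))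
        = ρ⁻¹ • Matrix.vecMulVec v (star v) := by
      rw [smul_mul_assoc, mul_smul_comm, hVV, smul_smul, smul_smul, mul_assoc,
        inv_mul_cancel₀ hρ0, mul_one]
    conv_lhs => rw [hPm]
    rw [sub_mul, one_mul, mul_sub, mul_one, hA2, sub_self, sub_zero, ← hPm]
  -- explicit formula for `K ξ`
  have h1 : wdbar P ξ * P ξ
      = -(ρ⁻¹ • Matrix.vecMulVec v (Matrix.vecMul (star (wd f ξ)) (P ξ))) := by
    rw [hwdbarP]
    simp only [sub_mul, add_mul, smul_mul_assoc, hVP, vmv_mul, hvP, vmv_zero_right,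
      smul_zero, zero_add, zero_sub]
  have h2 : P ξ * wdbar P ξ
      = -(ρ⁻¹ • Matrix.vecMulVec ((P ξ).mulVec (wdbar f ξ)) (star v)) := by
    rw [hwdbarP]
    simp only [mul_sub, mul_add, mul_smul_comm, hPV, mul_vmv, hPv, vmv_zero_left,
      smul_zero, add_zero, zero_sub, neg_neg]
  have hKf : K ξ = ρ⁻¹ • (Matrix.vecMulVec ((P ξ).mulVec (wdbar f ξ)) (star v)
      - Matrix.vecMulVec v (Matrix.vecMul (star (wd f ξ)) (P ξ))) := by
    simp only [hK]
    rw [h1, h2, smul_sub]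
    abel
  set pb := (P ξ).mulVec (wdbar f ξ) with hpb
  set q := Matrix.vecMul (star (wd f ξ)) (P ξ) with hq
  have hKH : (K ξ)ᴴ = ρ⁻¹ • (Matrix.vecMulVec v (star pb)
      - Matrix.vecMulVec (star q) (star v)) := by
    rw [hKf, Matrix.conjTranspose_smul, Matrix.conjTranspose_sub, vmv_conjT, vmv_conjT,
      star_star, hρinvstar]
  have hsq : star q = (P ξ).mulVec (wd f ξ) := by
    rw [hq, Matrix.star_vecMul, star_star, hPH]
  have hspb : star pb = Matrix.vecMul (star (wdbar f ξ)) (P ξ) := by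
    rw [hpb, Matrix.star_mulVec, hPH]
  have h0a : star pb ⬝ᵥ v = 0 := by
    rw [hspb, ← Matrix.dotProduct_mulVec, hPv, dotProduct_zero]
  have h0b : star v ⬝ᵥ pb = 0 := by
    rw [hpb, Matrix.dotProduct_mulVec, hvP, zero_dotProduct]
  have h0c : star v ⬝ᵥ star q = 0 := by
    rw [hsq, Matrix.dotProduct_mulVec, hvP, zero_dotProduct]
  have h0d : star pb ⬝ᵥ star q = star (wdbar f ξ) ⬝ᵥ (P ξ).mulVec (wd f ξ) := by
    rw [hspb, hsq, ← Matrix.dotProduct_mulVec, Matrix.mulVec_mulVec, hPP,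
      Matrix.dotProduct_mulVec]
  have hqq : star q ⬝ᵥ q = star (wd f ξ) ⬝ᵥ (P ξ).mulVec (wd f ξ) := by
    rw [hsq, hq, dotProduct_comm, ← Matrix.dotProduct_mulVec, Matrix.mulVec_mulVec,
      hPP, Matrix.dotProduct_mulVec]
  have hpbpb : star pb ⬝ᵥ pb = star (wdbar f ξ) ⬝ᵥ (P ξ).mulVec (wdbar f ξ) := by
    rw [hspb, hpb, ← Matrix.dotProduct_mulVec, Matrix.mulVec_mulVec, hPP,
      Matrix.dotProduct_mulVec]
  have hvv' : v ⬝ᵥ star v = ρ := by rw [hρ, dotProduct_comm]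
  -- claim 1
  have c1 : ((K ξ)ᴴ * K ξ).trace
      = ((wdbar (fun z => star (f z)) ξ ⬝ᵥ (P ξ).mulVec (wd f ξ))
          + (wd (fun z => star (f z)) ξ ⬝ᵥ (P ξ).mulVec (wdbar f ξ))) / ρ := by
    rw [hKH, hKf, hwdstar, hwdstar']
    rw [smul_mul_assoc, mul_smul_comm, sub_mul, mul_sub, mul_sub]
    rw [vmv_mul_vmv, vmv_mul_vmv, vmv_mul_vmv, vmv_mul_vmv]
    rw [h0a, h0b, ← hρ]
    simp only [zero_smul, sub_zero, zero_sub, sub_neg_eq_add]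
    rw [Matrix.trace_smul, Matrix.trace_smul, Matrix.trace_add, Matrix.trace_smul,
      Matrix.trace_smul, trace_vmv, trace_vmv, hvv', hqq, hpbpb]
    field_simp
    have h2 : ρ ^ 2 * ρ⁻¹ ^ 2 = 1 := by rw [← mul_pow, mul_inv_cancel₀ hρ0, one_pow]
    linear_combination (star (wdbar f ξ) ⬝ᵥ P ξ *ᵥ wdbar f ξ + star (wd f ξ) ⬝ᵥ P ξ *ᵥ wd f ξ) * h2
  -- claim 2
  have c2 : ((K ξ)ᴴ * (K ξ)ᴴ).trace
      = -2 * (wd (fun z => star (f z)) ξ ⬝ᵥ (P ξ).mulVec (wd f ξ)) / ρ := by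
    rw [hKH, hwdstar']
    rw [smul_mul_assoc, mul_smul_comm, sub_mul, mul_sub, mul_sub]
    rw [vmv_mul_vmv, vmv_mul_vmv, vmv_mul_vmv, vmv_mul_vmv]
    rw [h0a, h0c, h0d, ← hρ]
    simp only [zero_smul, zero_sub, sub_zero, sub_neg_eq_add]
    rw [Matrix.trace_smul, Matrix.trace_smul, Matrix.trace_sub, Matrix.trace_neg,
      Matrix.trace_smul, Matrix.trace_smul, trace_vmv, trace_vmv, hvv']
    rw [dotProduct_comm (star q) (star pb), h0d]
    field_simp
    have h2 : ρ ^ 2 * ρ⁻¹ ^ 2 = 1 := by rw [← mul_pow, mul_inv_cancel₀ hρ0, one_pow]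
    linear_combination (-2 * (star (wdbar f ξ) ⬝ᵥ P ξ *ᵥ wd f ξ)) * h2
  refine ⟨c1, c2, ?_, ?_⟩
  · rw [smul_mul_assoc, mul_smul_comm, smul_smul, Complex.I_mul_I, Matrix.trace_smul,
      neg_one_smul, neg_neg]
  · rw [smul_mul_assoc, mul_smul_comm, smul_smul, Complex.I_mul_I, Matrix.trace_smul,
      neg_one_smul, neg_neg, c2]
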